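/- Let j : ℕ → ℕ (indexed from 1) be the alternating sequence with j n = 2 for odd n and j n = 3 for even n, set I n = ∏_{i=1}^n j i, and for t > 0 define Z(t) = Σ_{k≥0} e^{−k²π²t} + Σ_{n≥1} 2^n Σ_{k≥0} e^{−(k+1/2)²π²(I n)²t} + Σ_{n≥1} 2^{n−1}(j n − 2)·I(n−1) Σ_{k≥1} e^{−k²π²(I n)²t} + Σ_{n≥2} 2^{n−1}(I(n−1) − 1) Σ_{k≥1} e^{−k²π²(I n)²t} + Σ_{n≥2} 2^{n−2}(I(n−1) − 1) Σ_{k≥1} e^{−k²π²(I n)²t/4}. Then, with α = log(24)/(2·log 6), there exist constants c, C > 0 such that c·t^{−α} ≤ Z(t) ≤ C·t^{−α} for all t ∈ (0, 1]. In particular the spectral dimension of this Laakso space equals log(24)/log(6). -/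

import Mathlib

open Real

private lemma aux_exp_le {x b : ℝ} (hx : 0 < x) (hb0 : 0 ≤ b) (hb1 : b ≤ 1) :
    Real.exp (-x) ≤ x ^ (-b) := by
  have hxb : 0 < x ^ b := Real.rpow_pos_of_pos hx b
  have h1 : x ^ b ≤ Real.exp x := by
    rcases le_total x 1 with h | h
    · exact le_trans (Real.rpow_le_one hx.le h hb0) (by linarith [Real.add_one_le_exp x, hx.le])
    · calc x ^ b ≤ x ^ (1:ℝ) := Real.rpow_le_rpow_of_exponent_le h hb1
        _ = x := Real.rpow_one x
        _ ≤ Real.exp x := by linarith [Real.add_one_le_exp x]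
  rw [Real.rpow_neg hx.le, Real.exp_neg]
  exact inv_anti₀ hxb h1

private lemma term_bound {b : ℝ} (hb0 : 0 < b) (hb1 : b ≤ 1) {s : ℝ} (hs : 0 < s)
    {x : ℝ} (k : ℕ) (hx : ((k:ℝ)+1)^2 * π^2 * s ≤ x) :
    Real.exp (-x) ≤ ((k:ℝ)+1) ^ (-(2*b)) * s ^ (-b) := by
  have hk1 : (0:ℝ) < (k:ℝ)+1 := by positivity
  have hpi2 : (1:ℝ) ≤ π ^ 2 := by nlinarith [Real.pi_gt_three]
  have hx0 : 0 < ((k:ℝ)+1)^2 * π^2 * s := by positivity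
  have e1 : (((k:ℝ)+1)^2) ^ (-b) = ((k:ℝ)+1) ^ (-(2*b)) := by
    rw [← Real.rpow_natCast ((k:ℝ)+1) 2, ← Real.rpow_mul hk1.le]
    norm_num
  calc Real.exp (-x) ≤ Real.exp (-(((k:ℝ)+1)^2 * π^2 * s)) := by
        apply Real.exp_le_exp.2; linarith
    _ ≤ (((k:ℝ)+1)^2 * π^2 * s) ^ (-b) := aux_exp_le hx0 hb0.le hb1
    _ = (((k:ℝ)+1)^2) ^ (-b) * (π^2) ^ (-b) * s ^ (-b) := by
        rw [Real.mul_rpow (by positivity) hs.le, Real.mul_rpow (by positivity) (by positivity)]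
    _ ≤ ((k:ℝ)+1) ^ (-(2*b)) * 1 * s ^ (-b) := by
        rw [e1]
        gcongr
        exact Real.rpow_le_one_of_one_le_of_nonpos hpi2 (by linarith)
    _ = ((k:ℝ)+1) ^ (-(2*b)) * s ^ (-b) := by ring

private lemma summable_shift {b : ℝ} (hb : 1/2 < b) :
    Summable (fun k : ℕ => ((k:ℝ)+1) ^ (-(2*b))) := by
  have h : Summable (fun n : ℕ => (n:ℝ) ^ (-(2*b))) :=
    Real.summable_nat_rpow.2 (by linarith)
  have h2 := (summable_nat_add_iff 1).2 h
  refine h2.congr fun k => ?_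
  push_cast
  ring_nf

private lemma inner_bound {b : ℝ} (hb : 1/2 < b) (hb1 : b ≤ 1) {s : ℝ} (hs : 0 < s)
    (x : ℕ → ℝ) (hx : ∀ k : ℕ, ((k:ℝ)+1)^2 * π^2 * s ≤ x k) :
    Summable (fun k => Real.exp (-(x k))) ∧
      ∑' k, Real.exp (-(x k)) ≤ (∑' k:ℕ, ((k:ℝ)+1) ^ (-(2*b))) * s ^ (-b) := by
  have hsum := summable_shift hb
  have hS : Summable (fun k : ℕ => ((k:ℝ)+1)^(-(2*b)) * s ^ (-b)) := hsum.mul_right _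
  have hle : ∀ k, Real.exp (-(x k)) ≤ ((k:ℝ)+1)^(-(2*b)) * s^(-b) :=
    fun k => term_bound (by linarith) hb1 hs k (hx k)
  have hf : Summable (fun k => Real.exp (-(x k))) :=
    Summable.of_nonneg_of_le (fun k => (Real.exp_pos _).le) hle hS
  exact ⟨hf, by rw [← tsum_mul_right]; exact Summable.tsum_le_tsum hle hf hS⟩

private lemma pow_rpow_comm {x : ℝ} (hx : 0 ≤ x) (β : ℝ) (n : ℕ) :
    ((x^n)) ^ β = (x ^ β) ^ n := by
  rw [← Real.rpow_natCast x n, ← Real.rpow_mul hx, mul_comm,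
    Real.rpow_mul hx, Real.rpow_natCast]

private lemma master {α : ℝ} (h35 : 3/5 < α) (h95 : α < 19/20) :
    ∃ C : ℝ, 0 < C ∧ ∀ t ∈ Set.Ioc (0:ℝ) 1,
      Summable (fun n : ℕ => ((6:ℝ)^α)^n *
        min (((6:ℝ)^n * t) ^ (-(3/5:ℝ))) (((6:ℝ)^n * t) ^ (-(19/20:ℝ)))) ∧
      ∑' n : ℕ, ((6:ℝ)^α)^n *
        min (((6:ℝ)^n * t) ^ (-(3/5:ℝ))) (((6:ℝ)^n * t) ^ (-(19/20:ℝ))) ≤ C * t ^ (-α) := by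
  set A := (6:ℝ)^α with hA
  have hA0 : 0 < A := Real.rpow_pos_of_pos (by norm_num) _
  set r := A * (6:ℝ) ^ (-(3/5:ℝ)) with hrdef
  set q := A * (6:ℝ) ^ (-(19/20:ℝ)) with hqdef
  have hr : 1 < r := by
    rw [hrdef, hA, ← Real.rpow_add (by norm_num)]
    exact (Real.one_lt_rpow_iff_of_pos (by norm_num)).2 (Or.inl ⟨by norm_num, by linarith⟩)
  have hq1 : q < 1 := by
    rw [hqdef, hA, ← Real.rpow_add (by norm_num)]
    exact Real.rpow_lt_one_of_one_lt_of_neg (by norm_num) (by linarith)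
  have hq0 : 0 ≤ q := by positivity
  have hrpos : (0:ℝ) < r - 1 := by linarith
  have hqpos : (0:ℝ) < 1 - q := by linarith
  have hrinv : (0:ℝ) ≤ (r-1)⁻¹ := (inv_nonneg).2 hrpos.le
  have hqinv : (0:ℝ) ≤ (1-q)⁻¹ := (inv_nonneg).2 hqpos.le
  refine ⟨A * ((r - 1)⁻¹ + (1 - q)⁻¹), by
    have : (0:ℝ) < (r-1)⁻¹ := inv_pos.2 hrpos
    have : (0:ℝ) < (1-q)⁻¹ := inv_pos.2 hqpos
    positivity, ?_⟩
  rintro t ⟨ht0, ht1⟩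
  set f : ℕ → ℝ := fun n => A^n *
      min (((6:ℝ)^n * t) ^ (-(3/5:ℝ))) (((6:ℝ)^n * t) ^ (-(19/20:ℝ))) with hfdef
  set n₀ := Nat.log 6 ⌊1/t⌋₊ with hn₀
  set N := n₀ + 1 with hN
  have hfl : 1 ≤ ⌊1/t⌋₊ := Nat.le_floor (by rw [Nat.cast_one]; exact one_le_one_div ht0 ht1)
  have h6n₀ : ((6:ℝ))^n₀ ≤ 1/t := by
    have h1 : (6:ℕ)^n₀ ≤ ⌊1/t⌋₊ := Nat.pow_log_le_self 6 (by omega)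
    calc ((6:ℝ))^n₀ = (((6:ℕ)^n₀ : ℕ) : ℝ) := by push_cast; ring
      _ ≤ (⌊1/t⌋₊ : ℝ) := by exact_mod_cast h1
      _ ≤ 1/t := Nat.floor_le (by positivity)
  have h6N : 1/t < (6:ℝ)^N := by
    have h1 : ⌊1/t⌋₊ + 1 ≤ 6^N := Nat.lt_pow_succ_log_self (by norm_num) _
    calc 1/t < ⌊1/t⌋₊ + 1 := Nat.lt_floor_add_one _
      _ ≤ (6:ℝ)^N := by exact_mod_cast h1
  have h6Nt : 1 ≤ (6:ℝ)^N * t := by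
    rw [div_lt_iff₀ ht0] at h6N
    linarith
  have hAn : A^N ≤ A * t ^ (-α) := by
    have h1 : A^n₀ ≤ t^(-α) := by
      have e : A^n₀ = ((6:ℝ)^n₀)^α := (pow_rpow_comm (by norm_num) α n₀).symm
      rw [e]
      calc ((6:ℝ)^n₀)^α ≤ (1/t)^α := Real.rpow_le_rpow (by positivity) h6n₀ (by linarith)
        _ = t^(-α) := by rw [one_div, Real.inv_rpow ht0.le, ← Real.rpow_neg ht0.le]
    calc A^N = A * A^n₀ := by rw [hN, pow_succ]; ring
      _ ≤ A * t^(-α) := by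
          have := Real.rpow_nonneg ht0.le (-α)
          nlinarith
  have hfle : ∀ (β : ℝ) (n : ℕ),
      min (((6:ℝ)^n * t) ^ (-(3/5:ℝ))) (((6:ℝ)^n * t) ^ (-(19/20:ℝ))) ≤ ((6:ℝ)^n * t) ^ β →
      f n ≤ (A * (6:ℝ)^β)^n * t ^ β := by
    intro β n hmin
    calc f n ≤ A^n * (((6:ℝ)^n * t) ^ β) := by
          exact mul_le_mul_of_nonneg_left hmin (by positivity)
      _ = (A * (6:ℝ)^β)^n * t ^ β := by
          rw [Real.mul_rpow (by positivity) ht0.le, pow_rpow_comm (by norm_num) β n, mul_pow]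
          ring
  have hfle35 : ∀ n, f n ≤ r^n * t ^ (-(3/5:ℝ)) := fun n => hfle _ n (min_le_left _ _)
  have hfle95 : ∀ n, f n ≤ q^n * t ^ (-(19/20:ℝ)) := fun n => hfle _ n (min_le_right _ _)
  have hfnn : ∀ n, 0 ≤ f n := by
    intro n
    exact mul_nonneg (by positivity)
      (le_min (Real.rpow_nonneg (by positivity) _) (Real.rpow_nonneg (by positivity) _))
  have hgsum : Summable (fun n : ℕ => q^n * t ^ (-(19/20:ℝ))) :=
    (summable_geometric_of_lt_one hq0 hq1).mul_right _
  have hfsum : Summable f := Summable.of_nonneg_of_le hfnn hfle95 hgsum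
  refine ⟨hfsum, ?_⟩
  have eR : ∀ β : ℝ, (A * (6:ℝ)^β)^N * t ^ β = A^N * ((6:ℝ)^N * t) ^ β := by
    intro β
    rw [Real.mul_rpow (by positivity) ht0.le, pow_rpow_comm (by norm_num) β N, mul_pow]
    ring
  have hle1 : ∀ β : ℝ, β ≤ 0 → ((6:ℝ)^N * t) ^ β ≤ 1 := fun β hβ =>
    Real.rpow_le_one_of_one_le_of_nonpos h6Nt hβ
  have hp1 : ∑ n ∈ Finset.range N, f n ≤ A * t^(-α) * (r-1)⁻¹ := by
    have h1 : ∑ n ∈ Finset.range N, f n ≤ (∑ n ∈ Finset.range N, r^n) * t ^ (-(3/5:ℝ)) := by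
      rw [Finset.sum_mul]
      exact Finset.sum_le_sum fun n _ => hfle35 n
    have h2 : (∑ n ∈ Finset.range N, r^n) = (r^N - 1)/(r-1) := geom_sum_eq hr.ne' N
    have h3 : (r^N - 1)/(r-1) * t ^ (-(3/5:ℝ)) ≤ r^N * t ^ (-(3/5:ℝ)) * (r-1)⁻¹ := by
      have ht35 : 0 ≤ t ^ (-(3/5:ℝ)) := Real.rpow_nonneg ht0.le _
      have h4 : (r^N - 1)/(r-1) ≤ r^N/(r-1) := by
        gcongr
        linarith
      calc (r^N - 1)/(r-1) * t ^ (-(3/5:ℝ)) ≤ r^N/(r-1) * t ^ (-(3/5:ℝ)) :=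
            mul_le_mul_of_nonneg_right h4 ht35
        _ = r^N * t ^ (-(3/5:ℝ)) * (r-1)⁻¹ := by rw [div_eq_mul_inv]; ring
    have h4 : r^N * t ^ (-(3/5:ℝ)) ≤ A^N := by
      rw [hrdef, eR]
      calc A^N * ((6:ℝ)^N * t) ^ (-(3/5:ℝ)) ≤ A^N * 1 := by
            exact mul_le_mul_of_nonneg_left (hle1 _ (by norm_num)) (by positivity)
        _ = A^N := by ring
    calc ∑ n ∈ Finset.range N, f n ≤ (r^N - 1)/(r-1) * t ^ (-(3/5:ℝ)) := by rw [← h2]; exact h1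
      _ ≤ r^N * t ^ (-(3/5:ℝ)) * (r-1)⁻¹ := h3
      _ ≤ A^N * (r-1)⁻¹ := mul_le_mul_of_nonneg_right h4 hrinv
      _ ≤ A * t^(-α) * (r-1)⁻¹ := mul_le_mul_of_nonneg_right hAn hrinv
  have hp2 : ∑' n : ℕ, f (n + N) ≤ A * t^(-α) * (1-q)⁻¹ := by
    have hsum1 : Summable (fun n : ℕ => f (n + N)) := (summable_nat_add_iff N).2 hfsum
    have hsum2 : Summable (fun n : ℕ => (q^N * t ^ (-(19/20:ℝ))) * q^n) :=
      (summable_geometric_of_lt_one hq0 hq1).mul_left _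
    have h1 : ∑' n : ℕ, f (n + N) ≤ ∑' n : ℕ, (q^N * t ^ (-(19/20:ℝ))) * q^n := by
      refine Summable.tsum_le_tsum (fun n => ?_) hsum1 hsum2
      calc f (n + N) ≤ q^(n+N) * t ^ (-(19/20:ℝ)) := hfle95 _
        _ = (q^N * t ^ (-(19/20:ℝ))) * q^n := by rw [pow_add]; ring
    have h2 : ∑' n : ℕ, (q^N * t ^ (-(19/20:ℝ))) * q^n
        = (q^N * t ^ (-(19/20:ℝ))) * (1-q)⁻¹ := by
      rw [tsum_mul_left, tsum_geometric_of_lt_one hq0 hq1]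
    have h3 : q^N * t ^ (-(19/20:ℝ)) ≤ A^N := by
      rw [hqdef, eR]
      calc A^N * ((6:ℝ)^N * t) ^ (-(19/20:ℝ)) ≤ A^N * 1 := by
            exact mul_le_mul_of_nonneg_left (hle1 _ (by norm_num)) (by positivity)
        _ = A^N := by ring
    calc ∑' n : ℕ, f (n + N) ≤ (q^N * t ^ (-(19/20:ℝ))) * (1-q)⁻¹ := by rw [← h2]; exact h1
      _ ≤ A^N * (1-q)⁻¹ := mul_le_mul_of_nonneg_right h3 hqinv
      _ ≤ A * t^(-α) * (1-q)⁻¹ := mul_le_mul_of_nonneg_right hAn hqinv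
  have hsplit : (∑ n ∈ Finset.range N, f n) + ∑' n : ℕ, f (n + N) = ∑' n : ℕ, f n :=
    Summable.sum_add_tsum_nat_add N hfsum
  calc ∑' n : ℕ, f n = (∑ n ∈ Finset.range N, f n) + ∑' n : ℕ, f (n + N) := hsplit.symm
    _ ≤ A * t^(-α) * (r-1)⁻¹ + A * t^(-α) * (1-q)⁻¹ := add_le_add hp1 hp2
    _ = A * ((r - 1)⁻¹ + (1 - q)⁻¹) * t^(-α) := by ring

private lemma outer_bound {t A : ℝ} (ht0 : 0 < t) (hA0 : 0 < A)
    (M : ℕ → ℝ) (x : ℕ → ℕ → ℝ)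
    (hM0 : ∀ n, 0 ≤ M n) (hM : ∀ n, M n ≤ 10 * A^n)
    (hx : ∀ (n k : ℕ), ((k:ℝ)+1)^2 * π^2 * ((6:ℝ)^n * t/8) ≤ x n k)
    (hfsum : Summable (fun n : ℕ => A^n *
      min (((6:ℝ)^n * t) ^ (-(3/5:ℝ))) (((6:ℝ)^n * t) ^ (-(19/20:ℝ))))) :
    Summable (fun n : ℕ => M n * ∑' k : ℕ, Real.exp (-(x n k))) ∧
    ∑' n : ℕ, M n * ∑' k : ℕ, Real.exp (-(x n k)) ≤
      (80 * max (∑' k:ℕ, ((k:ℝ)+1) ^ (-(2*(3/5:ℝ)))) (∑' k:ℕ, ((k:ℝ)+1) ^ (-(2*(19/20:ℝ))))) *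
      ∑' n : ℕ, A^n * min (((6:ℝ)^n * t) ^ (-(3/5:ℝ))) (((6:ℝ)^n * t) ^ (-(19/20:ℝ))) := by
  set K₁ := ∑' k:ℕ, ((k:ℝ)+1) ^ (-(2*(3/5:ℝ))) with hK₁
  set K₂ := ∑' k:ℕ, ((k:ℝ)+1) ^ (-(2*(19/20:ℝ))) with hK₂
  have hK₁0 : 0 ≤ K₁ := tsum_nonneg fun k => Real.rpow_nonneg (by positivity) _
  have hK₂0 : 0 ≤ K₂ := tsum_nonneg fun k => Real.rpow_nonneg (by positivity) _
  set K := max K₁ K₂ with hK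
  have hK0 : 0 ≤ K := le_trans hK₁0 (le_max_left _ _)
  set f : ℕ → ℝ := fun n => A^n *
      min (((6:ℝ)^n * t) ^ (-(3/5:ℝ))) (((6:ℝ)^n * t) ^ (-(19/20:ℝ))) with hfdef
  have key : ∀ n : ℕ, M n * ∑' k : ℕ, Real.exp (-(x n k)) ≤ (80*K) * f n := by
    intro n
    have hs : 0 < (6:ℝ)^n * t/8 := by positivity
    have h1 := inner_bound (by norm_num) (by norm_num : (3/5:ℝ) ≤ 1) hs (x n) (hx n)
    have h2 := inner_bound (by norm_num) (by norm_num : (19/20:ℝ) ≤ 1) hs (x n) (hx n)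
    have hinn : 0 ≤ ∑' k : ℕ, Real.exp (-(x n k)) := tsum_nonneg fun k => (Real.exp_pos _).le
    have hstep : ∀ b : ℝ, 0 < b → b ≤ 1 →
        ((6:ℝ)^n * t/8) ^ (-b) ≤ 8 * ((6:ℝ)^n * t)^(-b) := by
      intro b hb0 hb1
      have h8 : (8:ℝ)^b ≤ 8 := by
        calc (8:ℝ)^b ≤ (8:ℝ)^(1:ℝ) := Real.rpow_le_rpow_of_exponent_le (by norm_num) hb1
          _ = 8 := Real.rpow_one 8
      have h6t : (0:ℝ) ≤ (6:ℝ)^n * t := le_of_lt (mul_pos (pow_pos (by norm_num) n) ht0)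
      calc ((6:ℝ)^n * t/8) ^ (-b) = ((6:ℝ)^n * t)^(-b) * ((8:ℝ)⁻¹)^(-b) := by
            rw [div_eq_mul_inv, Real.mul_rpow h6t (by norm_num)]
        _ = ((6:ℝ)^n * t)^(-b) * (8:ℝ)^b := by
            rw [Real.inv_rpow (by norm_num : (0:ℝ) ≤ 8),
              Real.rpow_neg (by norm_num : (0:ℝ) ≤ 8), inv_inv]
        _ ≤ ((6:ℝ)^n * t)^(-b) * 8 :=
            mul_le_mul_of_nonneg_left h8 (Real.rpow_nonneg (by positivity) _)
        _ = 8 * ((6:ℝ)^n * t)^(-b) := by ring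
    have hgen : ∀ (b Kb : ℝ), 0 < b → b ≤ 1 → Kb ≤ K → 0 ≤ Kb →
        (∑' k : ℕ, Real.exp (-(x n k))) ≤ Kb * ((6:ℝ)^n * t/8) ^ (-b) →
        M n * ∑' k : ℕ, Real.exp (-(x n k)) ≤ (80*K*A^n) * ((6:ℝ)^n * t)^(-b) := by
      intro b Kb hb0 hb1 hKbK hKb0 hbound
      have hAn : (0:ℝ) ≤ A^n := by positivity
      have hg0 : (0:ℝ) ≤ ((6:ℝ)^n * t)^(-b) := Real.rpow_nonneg (by positivity) _
      calc M n * ∑' k : ℕ, Real.exp (-(x n k))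
          ≤ (10*A^n) * (Kb * ((6:ℝ)^n * t/8) ^ (-b)) := by
            apply mul_le_mul (hM n) hbound hinn (by positivity)
        _ ≤ (10*A^n) * (Kb * (8 * ((6:ℝ)^n * t)^(-b))) := by
            apply mul_le_mul_of_nonneg_left _ (by positivity)
            exact mul_le_mul_of_nonneg_left (hstep b hb0 hb1) hKb0
        _ = (80*Kb*A^n) * ((6:ℝ)^n * t)^(-b) := by ring
        _ ≤ (80*K*A^n) * ((6:ℝ)^n * t)^(-b) := by
            apply mul_le_mul_of_nonneg_right _ hg0
            nlinarith
    have e : (80*K) * f n = min ((80*K*A^n) * (((6:ℝ)^n * t) ^ (-(3/5:ℝ))))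
        ((80*K*A^n) * (((6:ℝ)^n * t) ^ (-(19/20:ℝ)))) := by
      rw [hfdef]
      rw [← mul_assoc, mul_min_of_nonneg _ _ (by positivity : (0:ℝ) ≤ 80*K*A^n)]
    rw [e]
    refine le_min ?_ ?_
    · exact hgen (3/5) K₁ (by norm_num) (by norm_num) (le_max_left _ _) hK₁0 h1.2
    · exact hgen (19/20) K₂ (by norm_num) (by norm_num) (le_max_right _ _) hK₂0 h2.2
  have hnn : ∀ n : ℕ, 0 ≤ M n * ∑' k : ℕ, Real.exp (-(x n k)) :=
    fun n => mul_nonneg (hM0 n) (tsum_nonneg fun k => (Real.exp_pos _).le)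
  have hsum2 : Summable (fun n : ℕ => (80*K) * f n) := hfsum.mul_left _
  have hsum1 : Summable (fun n : ℕ => M n * ∑' k : ℕ, Real.exp (-(x n k))) :=
    Summable.of_nonneg_of_le hnn key hsum2
  refine ⟨hsum1, ?_⟩
  calc ∑' n : ℕ, M n * ∑' k : ℕ, Real.exp (-(x n k)) ≤ ∑' n : ℕ, (80*K) * f n :=
        Summable.tsum_le_tsum key hsum1 hsum2
    _ = (80*K) * ∑' n : ℕ, f n := tsum_mul_left

set_option maxHeartbeats 2000000 in
/-- The heat-kernel trace of the Laakso space with alternating sequence `j = {2,3,2,3,...}`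
satisfies `Z(t) ≍ t^(−α)` with `α = log 24/(2 log 6)` for `t ∈ (0, 1]`; in particular its
spectral dimension equals `log 24/log 6`. -/
theorem laakso_heat_trace_2323
    (j : ℕ → ℕ)
    (hodd : ∀ n, Odd n → j n = 2)
    (heven : ∀ n, 1 ≤ n → Even n → j n = 3)
    (I : ℕ → ℕ) (hI : ∀ n, I n = ∏ i ∈ Finset.Icc 1 n, j i)
    (Z : ℝ → ℝ)
    (hZ : ∀ t : ℝ, Z t =
      (∑' k : ℕ, Real.exp (-((k : ℝ) ^ 2 * π ^ 2) * t)) +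
      (∑' n : ℕ, (2 : ℝ) ^ (n + 1) *
        ∑' k : ℕ, Real.exp (-(((k : ℝ) + 1 / 2) ^ 2 * π ^ 2 * (I (n + 1) : ℝ) ^ 2) * t)) +
      (∑' n : ℕ, ((2 ^ n * (j (n + 1) - 2) * I n : ℕ) : ℝ) *
        ∑' k : ℕ, Real.exp (-(((k : ℝ) + 1) ^ 2 * π ^ 2 * (I (n + 1) : ℝ) ^ 2) * t)) +
      (∑' n : ℕ, ((2 ^ (n + 1) * (I (n + 1) - 1) : ℕ) : ℝ) *
        ∑' k : ℕ, Real.exp (-(((k : ℝ) + 1) ^ 2 * π ^ 2 * (I (n + 2) : ℝ) ^ 2) * t)) +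
      (∑' n : ℕ, ((2 ^ n * (I (n + 1) - 1) : ℕ) : ℝ) *
        ∑' k : ℕ, Real.exp (-(((k : ℝ) + 1) ^ 2 * π ^ 2 * (I (n + 2) : ℝ) ^ 2 / 4) * t))) :
    ∃ c C : ℝ, 0 < c ∧ 0 < C ∧
      ∀ t ∈ Set.Ioc (0 : ℝ) 1,
        c * t ^ (-(Real.log 24 / (2 * Real.log 6))) ≤ Z t ∧
        Z t ≤ C * t ^ (-(Real.log 24 / (2 * Real.log 6))) := by
  have hlog6 : 0 < Real.log 6 := Real.log_pos (by norm_num)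
  set α := Real.log 24 / (2 * Real.log 6) with hαdef
  have h65 : 6 * Real.log 6 < 5 * Real.log 24 := by
    have h := Real.log_lt_log (by positivity : (0:ℝ) < 6^6) (by norm_num : (6:ℝ)^6 < 24^5)
    rw [Real.log_pow, Real.log_pow] at h
    push_cast at h
    linarith
  have h1019 : 10 * Real.log 24 < 19 * Real.log 6 := by
    have h := Real.log_lt_log (by positivity : (0:ℝ) < 24^10) (by norm_num : (24:ℝ)^10 < 6^19)
    rw [Real.log_pow, Real.log_pow] at h
    push_cast at h
    linarith
  have hα35 : 3/5 < α := by
    rw [hαdef, lt_div_iff₀ (by linarith)]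
    linarith
  have hα95 : α < 19/20 := by
    rw [hαdef, div_lt_iff₀ (by linarith)]
    linarith
  have hα0 : 0 < α := by linarith
  set A := (6:ℝ) ^ α with hAdef
  have hA0 : 0 < A := Real.rpow_pos_of_pos (by norm_num) _
  have hA2 : A^2 = 24 := by
    rw [hAdef, pow_two, ← Real.rpow_add (by norm_num : (0:ℝ) < 6),
      Real.rpow_def_of_pos (by norm_num : (0:ℝ) < 6)]
    have e : Real.log 6 * (α + α) = Real.log 24 := by
      rw [hαdef]
      field_simp
      ring
    rw [e, Real.exp_log (by norm_num)]
  -- values of I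
  have hIrec : ∀ n, I (n+1) = I n * j (n+1) := by
    intro n
    rw [hI, hI, Finset.prod_Icc_succ_top (by omega : 1 ≤ n+1)]
  have hI0 : I 0 = 1 := by rw [hI]; simp
  have hIval : ∀ m, I (2*m) = 6^m ∧ I (2*m+1) = 2*6^m := by
    intro m
    induction m with
    | zero =>
      refine ⟨by simpa using hI0, ?_⟩
      have h1 : I 1 = I 0 * j 1 := hIrec 0
      rw [show 2*0+1 = 1 from rfl, h1, hI0, hodd 1 ⟨0, by ring⟩]
      norm_num
    | succ m ih =>
      have e1 : 2*(m+1) = (2*m+1)+1 := by ring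
      have h1 : I (2*(m+1)) = 6^(m+1) := by
        rw [e1, hIrec, ih.2, heven ((2*m+1)+1) (by omega) ⟨m+1, by ring⟩]
        ring
      refine ⟨h1, ?_⟩
      rw [hIrec, h1, hodd (2*(m+1)+1) ⟨m+1, by ring⟩]
      ring
  have hIsq : ∀ n : ℕ, ((I n : ℝ))^2 ≤ 6^n ∧ (6:ℝ)^n ≤ 2 * ((I n:ℝ))^2 := by
    intro n
    rcases Nat.even_or_odd n with ⟨m, rfl⟩ | ⟨m, rfl⟩
    · rw [show m + m = 2*m from by ring, (hIval m).1]
      push_cast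
      rw [mul_comm 2 m, pow_mul]
      exact ⟨le_refl _, by nlinarith [sq_nonneg ((6:ℝ)^m)]⟩
    · rw [(hIval m).2]
      push_cast
      have e : (6:ℝ)^(2*m+1) = 6*((6:ℝ)^m)^2 := by
        rw [pow_succ, mul_comm 2 m, pow_mul]
        ring
      rw [e]
      constructor
      · nlinarith [sq_nonneg ((6:ℝ)^m)]
      · nlinarith [sq_nonneg ((6:ℝ)^m)]
  have hsq_le : ∀ x y : ℝ, 0 ≤ y → x^2 ≤ y^2 → x ≤ y := by
    intro x y hy h
    nlinarith [sq_nonneg (x-y), sq_nonneg (x+y)]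
  have sqpow : ∀ (x:ℝ) (n:ℕ), (x^n)^2 = (x^2)^n := fun x n => by
    rw [← pow_mul, mul_comm, pow_mul]
  have h2A : ∀ n:ℕ, (2:ℝ)^n ≤ A^n := by
    intro n
    apply hsq_le _ _ (by positivity)
    rw [sqpow, sqpow, hA2]
    exact pow_le_pow_left₀ (by norm_num) (by norm_num) n
  have hM3A : ∀ n, (2:ℝ)^n * (I n:ℝ) ≤ A^n := by
    intro n
    apply hsq_le _ _ (by positivity)
    rw [mul_pow, sqpow, sqpow, hA2]
    calc ((2:ℝ)^2)^n * ((I n:ℝ))^2 ≤ ((2:ℝ)^2)^n * 6^n :=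
          mul_le_mul_of_nonneg_left (hIsq n).1 (by positivity)
      _ = 24^n := by rw [← mul_pow]; norm_num
  have hM45A : ∀ n, (2:ℝ)^n * (I (n+1):ℝ) ≤ 5 * A^n := by
    intro n
    apply hsq_le _ _ (by positivity)
    rw [mul_pow, sqpow]
    calc ((2:ℝ)^2)^n * ((I (n+1):ℝ))^2 ≤ ((2:ℝ)^2)^n * 6^(n+1) :=
          mul_le_mul_of_nonneg_left (hIsq (n+1)).1 (by positivity)
      _ = (((2:ℝ)^2)*6)^n * 6 := by
          rw [mul_pow, pow_succ]
          ring
      _ = 6 * 24^n := by norm_num [mul_comm]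
      _ ≤ (5*A^n)^2 := by
          rw [mul_pow, sqpow, hA2]
          nlinarith [pow_pos (show (0:ℝ) < 24 from by norm_num) n]
  have hj3 : ∀ n, j (n+1) ≤ 3 := by
    intro n
    rcases Nat.even_or_odd (n+1) with he | ho
    · rw [heven (n+1) (by omega) he]
    · rw [hodd (n+1) ho]
      norm_num
  have hI1sq : ∀ n:ℕ, 3*(6:ℝ)^n ≤ ((I (n+1):ℝ))^2 := by
    intro n
    have h := (hIsq (n+1)).2
    rw [pow_succ] at h
    nlinarith [pow_pos (show (0:ℝ) < 6 from by norm_num) n]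
  have hI2sq : ∀ n:ℕ, 18*(6:ℝ)^n ≤ ((I (n+2):ℝ))^2 := by
    intro n
    have h := (hIsq (n+2)).2
    rw [pow_succ, pow_succ] at h
    nlinarith [pow_pos (show (0:ℝ) < 6 from by norm_num) n]
  -- constants
  obtain ⟨CM, hCM0, hCM⟩ := master hα35 hα95
  set K₁ := ∑' k:ℕ, ((k:ℝ)+1) ^ (-(2*(3/5:ℝ))) with hK₁def
  set K₂ := ∑' k:ℕ, ((k:ℝ)+1) ^ (-(2*(19/20:ℝ))) with hK₂def
  have hK₁0 : 0 ≤ K₁ := tsum_nonneg fun k => Real.rpow_nonneg (by positivity) _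
  have hK₂0 : 0 ≤ K₂ := tsum_nonneg fun k => Real.rpow_nonneg (by positivity) _
  have hKmax0 : 0 ≤ max K₁ K₂ := le_trans hK₁0 (le_max_left _ _)
  have h80 : (0:ℝ) ≤ 80 * max K₁ K₂ * CM :=
    mul_nonneg (mul_nonneg (by norm_num) hKmax0) hCM0.le
  refine ⟨Real.exp (-π^2)/288, (1+K₁) + 4*(80 * max K₁ K₂ * CM) + 1, by positivity, by linarith, ?_⟩
  rintro t ⟨ht0, ht1⟩
  have hZt := hZ t
  simp only [neg_mul] at hZt
  -- master at t
  have hMt : Summable (fun n : ℕ => A^n *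
        min (((6:ℝ)^n * t) ^ (-(3/5:ℝ))) (((6:ℝ)^n * t) ^ (-(19/20:ℝ)))) ∧
      ∑' n : ℕ, A^n *
        min (((6:ℝ)^n * t) ^ (-(3/5:ℝ))) (((6:ℝ)^n * t) ^ (-(19/20:ℝ))) ≤ CM * t ^ (-α) :=
    hCM t ⟨ht0, ht1⟩
  -- exponent lower bounds for the four double sums
  have hx2 : ∀ (n k : ℕ), ((k:ℝ)+1)^2 * π^2 * ((6:ℝ)^n * t/8) ≤
      ((k:ℝ) + 1/2)^2 * π^2 * (I (n+1) : ℝ)^2 * t := by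
    intro n k
    have hk : (0:ℝ) ≤ (k:ℝ) := Nat.cast_nonneg k
    have h1 : ((k:ℝ)+1)^2 ≤ 4*((k:ℝ)+1/2)^2 := by nlinarith
    have h2 := hI1sq n
    have core : ((k:ℝ)+1)^2 * π^2 * ((6:ℝ)^n/8) ≤ ((k:ℝ)+1/2)^2 * π^2 * ((I (n+1):ℝ))^2 := by
      have f1 : ((k:ℝ)+1)^2 * (π^2 * ((6:ℝ)^n/8)) ≤ (4*((k:ℝ)+1/2)^2) * (π^2 * ((6:ℝ)^n/8)) :=
        mul_le_mul_of_nonneg_right h1 (by positivity)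
      have f2 : ((k:ℝ)+1/2)^2 * π^2 * (3*(6:ℝ)^n) ≤ ((k:ℝ)+1/2)^2 * π^2 * ((I (n+1):ℝ))^2 :=
        mul_le_mul_of_nonneg_left h2 (by positivity)
      have f3 : (0:ℝ) ≤ ((k:ℝ)+1/2)^2 * π^2 * (6:ℝ)^n := by positivity
      linarith [f1, f2, f3]
    calc ((k:ℝ)+1)^2 * π^2 * ((6:ℝ)^n * t/8)
        = (((k:ℝ)+1)^2 * π^2 * ((6:ℝ)^n/8)) * t := by ring
      _ ≤ (((k:ℝ)+1/2)^2 * π^2 * ((I (n+1):ℝ))^2) * t := mul_le_mul_of_nonneg_right core ht0.le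
      _ = ((k:ℝ)+1/2)^2 * π^2 * (I (n+1) : ℝ)^2 * t := by ring
  have hx3 : ∀ (n k : ℕ), ((k:ℝ)+1)^2 * π^2 * ((6:ℝ)^n * t/8) ≤
      ((k:ℝ)+1)^2 * π^2 * (I (n+1) : ℝ)^2 * t := by
    intro n k
    have h6 : (0:ℝ) < (6:ℝ)^n := pow_pos (by norm_num) n
    calc ((k:ℝ)+1)^2 * π^2 * ((6:ℝ)^n * t/8)
        = (((k:ℝ)+1)^2 * π^2) * ((6:ℝ)^n/8) * t := by ring
      _ ≤ (((k:ℝ)+1)^2 * π^2) * ((I (n+1):ℝ))^2 * t := by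
          apply mul_le_mul_of_nonneg_right _ ht0.le
          apply mul_le_mul_of_nonneg_left _ (by positivity)
          linarith [hI1sq n]
      _ = ((k:ℝ)+1)^2 * π^2 * (I (n+1) : ℝ)^2 * t := by ring
  have hx4 : ∀ (n k : ℕ), ((k:ℝ)+1)^2 * π^2 * ((6:ℝ)^n * t/8) ≤
      ((k:ℝ)+1)^2 * π^2 * (I (n+2) : ℝ)^2 * t := by
    intro n k
    have h6 : (0:ℝ) < (6:ℝ)^n := pow_pos (by norm_num) n
    calc ((k:ℝ)+1)^2 * π^2 * ((6:ℝ)^n * t/8)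
        = (((k:ℝ)+1)^2 * π^2) * ((6:ℝ)^n/8) * t := by ring
      _ ≤ (((k:ℝ)+1)^2 * π^2) * ((I (n+2):ℝ))^2 * t := by
          apply mul_le_mul_of_nonneg_right _ ht0.le
          apply mul_le_mul_of_nonneg_left _ (by positivity)
          linarith [hI2sq n]
      _ = ((k:ℝ)+1)^2 * π^2 * (I (n+2) : ℝ)^2 * t := by ring
  have hx5 : ∀ (n k : ℕ), ((k:ℝ)+1)^2 * π^2 * ((6:ℝ)^n * t/8) ≤
      ((k:ℝ)+1)^2 * π^2 * (I (n+2) : ℝ)^2 / 4 * t := by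
    intro n k
    have h6 : (0:ℝ) < (6:ℝ)^n := pow_pos (by norm_num) n
    calc ((k:ℝ)+1)^2 * π^2 * ((6:ℝ)^n * t/8)
        = (((k:ℝ)+1)^2 * π^2) * ((6:ℝ)^n/8) * t := by ring
      _ ≤ (((k:ℝ)+1)^2 * π^2) * (((I (n+2):ℝ))^2/4) * t := by
          apply mul_le_mul_of_nonneg_right _ ht0.le
          apply mul_le_mul_of_nonneg_left _ (by positivity)
          linarith [hI2sq n]
      _ = ((k:ℝ)+1)^2 * π^2 * (I (n+2) : ℝ)^2 / 4 * t := by ring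
  -- multiplicity bounds
  have hM2 : ∀ n : ℕ, (2:ℝ)^(n+1) ≤ 10*A^n := by
    intro n
    rw [pow_succ]
    have h1 := h2A n
    have h2 : (0:ℝ) ≤ A^n := pow_nonneg hA0.le n
    linarith
  have hM3 : ∀ n : ℕ, ((2 ^ n * (j (n + 1) - 2) * I n : ℕ) : ℝ) ≤ 10*A^n := by
    intro n
    have h3 := hj3 n
    have hnat : 2^n*(j (n+1)-2)*I n ≤ 2^n * I n := by
      calc 2^n*(j (n+1)-2)*I n ≤ 2^n*1*I n :=
            Nat.mul_le_mul_right _ (Nat.mul_le_mul_left _ (by omega))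
        _ = 2^n * I n := by ring
    have h2 : (0:ℝ) ≤ A^n := pow_nonneg hA0.le n
    calc ((2 ^ n * (j (n + 1) - 2) * I n : ℕ) : ℝ) ≤ ((2^n * I n : ℕ):ℝ) := Nat.cast_le.2 hnat
      _ = (2:ℝ)^n * (I n : ℝ) := by push_cast; ring
      _ ≤ A^n := hM3A n
      _ ≤ 10*A^n := by linarith
  have hM4 : ∀ n : ℕ, ((2 ^ (n + 1) * (I (n + 1) - 1) : ℕ) : ℝ) ≤ 10*A^n := by
    intro n
    have hnat : 2^(n+1)*(I (n+1)-1) ≤ 2^(n+1)*I (n+1) :=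
      Nat.mul_le_mul_left _ (Nat.sub_le _ _)
    calc ((2 ^ (n + 1) * (I (n + 1) - 1) : ℕ) : ℝ) ≤ ((2^(n+1)*I (n+1) : ℕ):ℝ) :=
          Nat.cast_le.2 hnat
      _ = 2*((2:ℝ)^n * (I (n+1):ℝ)) := by push_cast; ring
      _ ≤ 2*(5*A^n) := by linarith [hM45A n]
      _ = 10*A^n := by ring
  have hM5 : ∀ n : ℕ, ((2 ^ n * (I (n + 1) - 1) : ℕ) : ℝ) ≤ 10*A^n := by
    intro n
    have hnat : 2^n*(I (n+1)-1) ≤ 2^n*I (n+1) := Nat.mul_le_mul_left _ (Nat.sub_le _ _)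
    have h2 : (0:ℝ) ≤ A^n := pow_nonneg hA0.le n
    calc ((2 ^ n * (I (n + 1) - 1) : ℕ) : ℝ) ≤ ((2^n*I (n+1) : ℕ):ℝ) := Nat.cast_le.2 hnat
      _ = (2:ℝ)^n * (I (n+1):ℝ) := by push_cast; ring
      _ ≤ 5*A^n := hM45A n
      _ ≤ 10*A^n := by linarith
  -- the four double sums
  have hT2 : Summable (fun n : ℕ => (2:ℝ)^(n+1) *
        ∑' k : ℕ, Real.exp (-(((k:ℝ) + 1/2)^2 * π^2 * (I (n+1) : ℝ)^2 * t))) ∧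
      ∑' n : ℕ, (2:ℝ)^(n+1) *
        ∑' k : ℕ, Real.exp (-(((k:ℝ) + 1/2)^2 * π^2 * (I (n+1) : ℝ)^2 * t)) ≤
      (80 * max K₁ K₂) * ∑' n : ℕ, A^n *
        min (((6:ℝ)^n * t) ^ (-(3/5:ℝ))) (((6:ℝ)^n * t) ^ (-(19/20:ℝ))) :=
    outer_bound ht0 hA0 _ _ (fun n => by positivity) hM2 hx2 hMt.1
  have hT3 : Summable (fun n : ℕ => ((2 ^ n * (j (n + 1) - 2) * I n : ℕ) : ℝ) *
        ∑' k : ℕ, Real.exp (-(((k:ℝ) + 1)^2 * π^2 * (I (n+1) : ℝ)^2 * t))) ∧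
      ∑' n : ℕ, ((2 ^ n * (j (n + 1) - 2) * I n : ℕ) : ℝ) *
        ∑' k : ℕ, Real.exp (-(((k:ℝ) + 1)^2 * π^2 * (I (n+1) : ℝ)^2 * t)) ≤
      (80 * max K₁ K₂) * ∑' n : ℕ, A^n *
        min (((6:ℝ)^n * t) ^ (-(3/5:ℝ))) (((6:ℝ)^n * t) ^ (-(19/20:ℝ))) :=
    outer_bound ht0 hA0 _ _ (fun n => Nat.cast_nonneg _) hM3 hx3 hMt.1
  have hT4 : Summable (fun n : ℕ => ((2 ^ (n + 1) * (I (n + 1) - 1) : ℕ) : ℝ) *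
        ∑' k : ℕ, Real.exp (-(((k:ℝ) + 1)^2 * π^2 * (I (n+2) : ℝ)^2 * t))) ∧
      ∑' n : ℕ, ((2 ^ (n + 1) * (I (n + 1) - 1) : ℕ) : ℝ) *
        ∑' k : ℕ, Real.exp (-(((k:ℝ) + 1)^2 * π^2 * (I (n+2) : ℝ)^2 * t)) ≤
      (80 * max K₁ K₂) * ∑' n : ℕ, A^n *
        min (((6:ℝ)^n * t) ^ (-(3/5:ℝ))) (((6:ℝ)^n * t) ^ (-(19/20:ℝ))) :=
    outer_bound ht0 hA0 _ _ (fun n => Nat.cast_nonneg _) hM4 hx4 hMt.1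
  have hT5 : Summable (fun n : ℕ => ((2 ^ n * (I (n + 1) - 1) : ℕ) : ℝ) *
        ∑' k : ℕ, Real.exp (-(((k:ℝ) + 1)^2 * π^2 * (I (n+2) : ℝ)^2 / 4 * t))) ∧
      ∑' n : ℕ, ((2 ^ n * (I (n + 1) - 1) : ℕ) : ℝ) *
        ∑' k : ℕ, Real.exp (-(((k:ℝ) + 1)^2 * π^2 * (I (n+2) : ℝ)^2 / 4 * t)) ≤
      (80 * max K₁ K₂) * ∑' n : ℕ, A^n *
        min (((6:ℝ)^n * t) ^ (-(3/5:ℝ))) (((6:ℝ)^n * t) ^ (-(19/20:ℝ))) :=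
    outer_bound ht0 hA0 _ _ (fun n => Nat.cast_nonneg _) hM5 hx5 hMt.1
  -- the first sum
  have hx1 : ∀ k : ℕ, ((k:ℝ)+1)^2 * π^2 * t ≤ (((k+1:ℕ)):ℝ)^2 * π^2 * t :=
    fun k => le_of_eq (by push_cast; ring)
  have h1i : Summable (fun k : ℕ => Real.exp (-((((k+1:ℕ)):ℝ)^2 * π^2 * t))) ∧
      ∑' k : ℕ, Real.exp (-((((k+1:ℕ)):ℝ)^2 * π^2 * t)) ≤ K₁ * t ^ (-(3/5:ℝ)) :=
    inner_bound (by norm_num) (by norm_num) ht0 _ hx1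
  have hT1sum : Summable (fun k : ℕ => Real.exp (-((k:ℝ)^2 * π^2 * t))) :=
    (summable_nat_add_iff (f := fun k : ℕ => Real.exp (-((k:ℝ)^2 * π^2 * t))) 1).1 h1i.1
  have hT1eq : (∑' k : ℕ, Real.exp (-((k:ℝ)^2 * π^2 * t)))
      = 1 + ∑' k : ℕ, Real.exp (-((((k+1:ℕ)):ℝ)^2 * π^2 * t)) := by
    rw [Summable.tsum_eq_zero_add hT1sum]
    norm_num
  have e1 : (1:ℝ) ≤ t^(-α) := by
    calc (1:ℝ) = t ^ (0:ℝ) := (Real.rpow_zero t).symm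
      _ ≤ t^(-α) := Real.rpow_le_rpow_of_exponent_ge ht0 ht1 (by linarith)
  have e2 : t^(-(3/5:ℝ)) ≤ t^(-α) := Real.rpow_le_rpow_of_exponent_ge ht0 ht1 (by linarith)
  have hU1 : (∑' k : ℕ, Real.exp (-((k:ℝ)^2 * π^2 * t))) ≤ (1+K₁)*t^(-α) := by
    rw [hT1eq]
    have h := h1i.2
    have h2 := mul_le_mul_of_nonneg_left e2 hK₁0
    nlinarith
  have hUB : (80 * max K₁ K₂) * (∑' n : ℕ, A^n *
        min (((6:ℝ)^n * t) ^ (-(3/5:ℝ))) (((6:ℝ)^n * t) ^ (-(19/20:ℝ))))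
      ≤ (80 * max K₁ K₂) * (CM * t^(-α)) :=
    mul_le_mul_of_nonneg_left hMt.2 (mul_nonneg (by norm_num) hKmax0)
  -- nonnegativity of the pieces
  have hT2nn : (0:ℝ) ≤ ∑' n : ℕ, (2:ℝ)^(n+1) *
      ∑' k : ℕ, Real.exp (-(((k:ℝ) + 1/2)^2 * π^2 * (I (n+1) : ℝ)^2 * t)) :=
    tsum_nonneg fun n => mul_nonneg (by positivity) (tsum_nonneg fun k => (Real.exp_pos _).le)
  have hT3nn : (0:ℝ) ≤ ∑' n : ℕ, ((2 ^ n * (j (n + 1) - 2) * I n : ℕ) : ℝ) *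
      ∑' k : ℕ, Real.exp (-(((k:ℝ) + 1)^2 * π^2 * (I (n+1) : ℝ)^2 * t)) :=
    tsum_nonneg fun n => mul_nonneg (Nat.cast_nonneg _) (tsum_nonneg fun k => (Real.exp_pos _).le)
  have hT4nn : (0:ℝ) ≤ ∑' n : ℕ, ((2 ^ (n + 1) * (I (n + 1) - 1) : ℕ) : ℝ) *
      ∑' k : ℕ, Real.exp (-(((k:ℝ) + 1)^2 * π^2 * (I (n+2) : ℝ)^2 * t)) :=
    tsum_nonneg fun n => mul_nonneg (Nat.cast_nonneg _) (tsum_nonneg fun k => (Real.exp_pos _).le)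
  have hT5nn : (0:ℝ) ≤ ∑' n : ℕ, ((2 ^ n * (I (n + 1) - 1) : ℕ) : ℝ) *
      ∑' k : ℕ, Real.exp (-(((k:ℝ) + 1)^2 * π^2 * (I (n+2) : ℝ)^2 / 4 * t)) :=
    tsum_nonneg fun n => mul_nonneg (Nat.cast_nonneg _) (tsum_nonneg fun k => (Real.exp_pos _).le)
  have hT1ge : (1:ℝ) ≤ ∑' k : ℕ, Real.exp (-((k:ℝ)^2 * π^2 * t)) := by
    rw [hT1eq]
    have h := tsum_nonneg (L := SummationFilter.unconditional ℕ) (fun k : ℕ => (Real.exp_pos (-((((k+1:ℕ)):ℝ)^2 * π^2 * t))).le)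
    linarith
  constructor
  · -- lower bound
    set m36 := Nat.log 36 ⌊1/t⌋₊ with hm36def
    have hfl : 1 ≤ ⌊1/t⌋₊ := Nat.le_floor (by rw [Nat.cast_one]; exact one_le_one_div ht0 ht1)
    have h36low : ((36:ℝ))^m36 ≤ 1/t := by
      have h1 : (36:ℕ)^m36 ≤ ⌊1/t⌋₊ := Nat.pow_log_le_self 36 (by omega)
      calc ((36:ℝ))^m36 = (((36:ℕ)^m36 : ℕ):ℝ) := by push_cast; ring
        _ ≤ (⌊1/t⌋₊:ℝ) := by exact_mod_cast h1
        _ ≤ 1/t := Nat.floor_le (by positivity)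
    have h36high : 1/t < (36:ℝ)^(m36+1) := by
      have h1 : ⌊1/t⌋₊ + 1 ≤ 36^(m36+1) := Nat.lt_pow_succ_log_self (by norm_num) _
      calc 1/t < ⌊1/t⌋₊ + 1 := Nat.lt_floor_add_one _
        _ ≤ (36:ℝ)^(m36+1) := by exact_mod_cast h1
    have h36A : (36:ℝ)^α = 24 := by
      rw [show (36:ℝ) = (6:ℝ)^(2:ℕ) from by norm_num, pow_rpow_comm (by norm_num) α 2]
      exact hA2
    have htα : t^(-α) ≤ 24^(m36+1) := by
      calc t^(-α) = (1/t)^α := by rw [one_div, Real.inv_rpow ht0.le, ← Real.rpow_neg ht0.le]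
        _ ≤ ((36:ℝ)^(m36+1))^α := Real.rpow_le_rpow (by positivity) h36high.le hα0.le
        _ = ((36:ℝ)^α)^(m36+1) := pow_rpow_comm (by norm_num) α (m36+1)
        _ = 24^(m36+1) := by rw [h36A]
    have hexp1 : Real.exp (-π^2) ≤ 1 := by
      rw [← Real.exp_zero]
      exact Real.exp_le_exp.2 (neg_nonpos.2 (sq_nonneg π))
    rcases Nat.eq_zero_or_pos m36 with hm0 | hmpos
    · -- m36 = 0 : t is of order 1
      have h24 : t^(-α) ≤ 24 := by
        rw [hm0] at htα
        simpa using htα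
      rw [hZt]
      have h2 : (0:ℝ) ≤ t^(-α) := Real.rpow_nonneg ht0.le _
      have hc : Real.exp (-π^2)/288 * t^(-α) ≤ 1 := by
        nlinarith [mul_le_mul hexp1 h24 h2 zero_le_one]
      linarith
    · -- m36 = mm + 1
      obtain ⟨mm, hmm⟩ : ∃ mm, m36 = mm + 1 := ⟨m36 - 1, by omega⟩
      have hIn1 : I (2*mm+1) = 2*6^mm := (hIval mm).2
      have hIn2 : I (2*mm+2) = 6^(mm+1) := by
        have h := (hIval (mm+1)).1
        rwa [show 2*(mm+1) = 2*mm+2 from by ring] at h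
      have hterm : ((2 ^ (2*mm + 1) * (I (2*mm + 1) - 1) : ℕ) : ℝ) *
          ∑' k : ℕ, Real.exp (-(((k:ℝ) + 1)^2 * π^2 * (I (2*mm+2) : ℝ)^2 * t)) ≤
          ∑' n : ℕ, ((2 ^ (n + 1) * (I (n + 1) - 1) : ℕ) : ℝ) *
          ∑' k : ℕ, Real.exp (-(((k:ℝ) + 1)^2 * π^2 * (I (n+2) : ℝ)^2 * t)) :=
        Summable.le_tsum hT4.1 (2*mm) (fun i _ =>
          mul_nonneg (Nat.cast_nonneg _) (tsum_nonneg fun k => (Real.exp_pos _).le))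
      have hs4 : (0:ℝ) < (6:ℝ)^(2*mm)*t/8 := by positivity
      have hi4 : Summable (fun k : ℕ =>
          Real.exp (-(((k:ℝ) + 1)^2 * π^2 * (I (2*mm+2) : ℝ)^2 * t))) :=
        (inner_bound (by norm_num : (1:ℝ)/2 < 3/5) (by norm_num) hs4 _ (hx4 (2*mm))).1
      have hIt : ((I (2*mm+2):ℝ))^2 * t ≤ 1 := by
        have he : ((I (2*mm+2):ℝ))^2 = (36:ℝ)^(mm+1) := by
          rw [hIn2]
          push_cast
          rw [← pow_mul, show (mm+1)*2 = 2*(mm+1) from mul_comm _ _, pow_mul]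
          norm_num
        rw [he]
        rw [hmm] at h36low
        rw [le_div_iff₀ ht0] at h36low
        linarith
      have hinner_ge : Real.exp (-π^2) ≤
          ∑' k : ℕ, Real.exp (-(((k:ℝ) + 1)^2 * π^2 * (I (2*mm+2) : ℝ)^2 * t)) := by
        have h0 := Summable.le_tsum hi4 0 (fun i _ => (Real.exp_pos _).le)
        refine le_trans ?_ h0
        apply Real.exp_le_exp.2
        have hπ2 : (0:ℝ) < π^2 := by positivity
        have hnn : (0:ℝ) ≤ ((I (2*mm+2):ℝ))^2 * t :=
          mul_nonneg (sq_nonneg _) ht0.le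
        have : (((0:ℕ):ℝ) + 1)^2 * π^2 * (I (2*mm+2) : ℝ)^2 * t ≤ π^2 := by
          push_cast
          nlinarith [hIt, hπ2]
        linarith
      have hmult : (2:ℝ)*24^mm ≤ ((2 ^ (2*mm + 1) * (I (2*mm + 1) - 1) : ℕ) : ℝ) := by
        have hnat : 2^(2*mm+1)*6^mm ≤ 2^(2*mm+1)*(I (2*mm+1)-1) := by
          apply Nat.mul_le_mul_left
          rw [hIn1]
          have h1 : 1 ≤ 6^mm := Nat.one_le_pow _ _ (by norm_num)
          omega
        calc (2:ℝ)*24^mm = ((2^(2*mm+1)*6^mm : ℕ):ℝ) := by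
              push_cast
              rw [pow_succ, pow_mul,
                show ((2:ℝ)^2)^mm * 2 * (6:ℝ)^mm = (((2:ℝ)^2)*6)^mm * 2 from by
                  rw [mul_pow]; ring]
              norm_num
              ring
          _ ≤ _ := Nat.cast_le.2 hnat
      have hTerm_ge : (2:ℝ)*24^mm * Real.exp (-π^2) ≤
          ((2 ^ (2*mm + 1) * (I (2*mm + 1) - 1) : ℕ) : ℝ) *
          ∑' k : ℕ, Real.exp (-(((k:ℝ) + 1)^2 * π^2 * (I (2*mm+2) : ℝ)^2 * t)) :=
        mul_le_mul hmult hinner_ge (Real.exp_pos _).le (Nat.cast_nonneg _)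
      have h24m : Real.exp (-π^2)/288 * t^(-α) ≤ (2:ℝ)*24^mm * Real.exp (-π^2) := by
        rw [hmm] at htα
        have h1 : (24:ℝ)^(mm+1+1) = 576*24^mm := by rw [pow_succ, pow_succ]; ring
        rw [h1] at htα
        have hc0 : (0:ℝ) ≤ Real.exp (-π^2)/288 := by positivity
        calc Real.exp (-π^2)/288 * t^(-α) ≤ Real.exp (-π^2)/288 * (576*24^mm) :=
              mul_le_mul_of_nonneg_left htα hc0
          _ = 2*24^mm * Real.exp (-π^2) := by ring
      rw [hZt]
      linarith
  · -- upper bound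
    rw [hZt]
    linarith [hU1, hT2.2, hT3.2, hT4.2, hT5.2, hUB, e1]
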